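/- For all x in [0,1], arcsin(x) ≤ (π/(π-2))·x / (2/(π-2) + sqrt(1-x^2)). -/

import Mathlib

open Real

lemma sin_lb (x : ℝ) (hx : 0 ≤ x) : x - x^3/6 ≤ Real.sin x := by
  have mono : MonotoneOn (fun y : ℝ => Real.sin y - (y - y^3/6)) (Set.Ici 0) := by
    apply monotoneOn_of_deriv_nonneg (convex_Ici 0)
    · fun_prop
    · apply Differentiable.differentiableOn; fun_prop
    · intro y _
      have H : HasDerivAt (fun y : ℝ => Real.sin y - (y - y^3/6))
          (Real.cos y - (1 - (3:ℕ)*y^2/6)) y := by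
        have h2 : HasDerivAt (fun y:ℝ => y - y^3/6) (1 - (3:ℕ)*y^2/6) y := by
          convert (hasDerivAt_id y).sub ((hasDerivAt_pow 3 y).div_const 6) using 1 <;> rfl
        exact (Real.hasDerivAt_sin y).sub h2
      rw [H.deriv]
      nlinarith [Real.one_sub_sq_div_two_le_cos (x := y)]
  simpa using mono (Set.self_mem_Ici) hx hx

lemma cos_ub (x : ℝ) (hx : 0 ≤ x) : Real.cos x ≤ 1 - x^2/2 + x^4/24 := by
  have mono : MonotoneOn (fun y : ℝ => (1 - y^2/2 + y^4/24) - Real.cos y) (Set.Ici 0) := by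
    apply monotoneOn_of_deriv_nonneg (convex_Ici 0)
    · fun_prop
    · apply Differentiable.differentiableOn; fun_prop
    · intro y hy
      rw [interior_Ici] at hy
      have H : HasDerivAt (fun y : ℝ => (1 - y^2/2 + y^4/24) - Real.cos y)
          ((0 - (2:ℕ)*y^1/2 + (4:ℕ)*y^3/24) - (-Real.sin y)) y := by
        have h2 : HasDerivAt (fun y:ℝ => 1 - y^2/2 + y^4/24)
            (0 - (2:ℕ)*y^1/2 + (4:ℕ)*y^3/24) y := by
          convert ((hasDerivAt_const y (1:ℝ)).sub ((hasDerivAt_pow 2 y).div_const 2)).add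
            ((hasDerivAt_pow 4 y).div_const 24) using 1 <;> rfl
        exact h2.sub (Real.hasDerivAt_cos y)
      rw [H.deriv]
      nlinarith [sin_lb y (le_of_lt hy)]
  simpa using mono (Set.self_mem_Ici) hx hx

lemma sin_ub (x : ℝ) (hx : 0 ≤ x) : Real.sin x ≤ x - x^3/6 + x^5/120 := by
  have mono : MonotoneOn (fun y : ℝ => (y - y^3/6 + y^5/120) - Real.sin y) (Set.Ici 0) := by
    apply monotoneOn_of_deriv_nonneg (convex_Ici 0)
    · fun_prop
    · apply Differentiable.differentiableOn; fun_prop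
    · intro y hy
      rw [interior_Ici] at hy
      have H : HasDerivAt (fun y : ℝ => (y - y^3/6 + y^5/120) - Real.sin y)
          ((1 - (3:ℕ)*y^2/6 + (5:ℕ)*y^4/120) - Real.cos y) y := by
        have h2 : HasDerivAt (fun y:ℝ => y - y^3/6 + y^5/120)
            (1 - (3:ℕ)*y^2/6 + (5:ℕ)*y^4/120) y := by
          convert ((hasDerivAt_id y).sub ((hasDerivAt_pow 3 y).div_const 6)).add
            ((hasDerivAt_pow 5 y).div_const 120) using 1 <;> rfl
        exact h2.sub (Real.hasDerivAt_sin y)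
      rw [H.deriv]
      nlinarith [cos_ub y (le_of_lt hy)]
  simpa using mono (Set.self_mem_Ici) hx hx

lemma cos_lb (x : ℝ) (hx : 0 ≤ x) : 1 - x^2/2 + x^4/24 - x^6/720 ≤ Real.cos x := by
  have mono : MonotoneOn (fun y : ℝ => Real.cos y - (1 - y^2/2 + y^4/24 - y^6/720)) (Set.Ici 0) := by
    apply monotoneOn_of_deriv_nonneg (convex_Ici 0)
    · fun_prop
    · apply Differentiable.differentiableOn; fun_prop
    · intro y hy
      rw [interior_Ici] at hy
      have H : HasDerivAt (fun y : ℝ => Real.cos y - (1 - y^2/2 + y^4/24 - y^6/720))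
          ((-Real.sin y) - (0 - (2:ℕ)*y^1/2 + (4:ℕ)*y^3/24 - (6:ℕ)*y^5/720)) y := by
        have h2 : HasDerivAt (fun y:ℝ => 1 - y^2/2 + y^4/24 - y^6/720)
            (0 - (2:ℕ)*y^1/2 + (4:ℕ)*y^3/24 - (6:ℕ)*y^5/720) y := by
          convert (((hasDerivAt_const y (1:ℝ)).sub ((hasDerivAt_pow 2 y).div_const 2)).add
            ((hasDerivAt_pow 4 y).div_const 24)).sub ((hasDerivAt_pow 6 y).div_const 720) using 1 <;> rfl
        exact (Real.hasDerivAt_cos y).sub h2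
      rw [H.deriv]
      nlinarith [sin_ub y (le_of_lt hy)]
  simpa using mono (Set.self_mem_Ici) hx hx
open Real

set_option maxHeartbeats 1000000 in
lemma key (θ : ℝ) (h0 : 0 ≤ θ) (h2 : θ ≤ π/2) :
    θ * (2 + (π-2) * Real.cos θ) ≤ π * Real.sin θ := by
  have hπ1 : π > 3.141592 := Real.pi_gt_d6
  have hπ2 : π < 3.141593 := Real.pi_lt_d6
  have hππu : π*π < 3.141593*π := by
    have := mul_lt_mul_of_pos_right hπ2 (show (0:ℝ) < π by linarith)
    linarith
  have hππl : π*π > 3.141592*π := by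
    have := mul_lt_mul_of_pos_right hπ1 (show (0:ℝ) < π by linarith)
    linarith
  rcases le_or_gt θ 0.9 with hc | hc
  · have hs := sin_lb θ h0
    have hcb := cos_ub θ h0
    have h1 : (π-2)*θ*Real.cos θ ≤ (π-2)*θ*(1 - θ^2/2 + θ^4/24) :=
      mul_le_mul_of_nonneg_left hcb (mul_nonneg (by linarith) h0)
    have h2' : π*(θ - θ^3/6) ≤ π*Real.sin θ :=
      mul_le_mul_of_nonneg_left hs (by linarith)
    have hθ2 : θ^2 ≤ 0.81 := by nlinarith
    have hbr : (π-2)*θ^2/24 ≤ π/3 - 1 := by nlinarith [mul_le_mul_of_nonneg_left hθ2 (show (0:ℝ) ≤ π - 2 by linarith)]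
    have hfin : 0 ≤ θ^3 * ((π/3-1) - (π-2)*θ^2/24) :=
      mul_nonneg (pow_nonneg h0 3) (by linarith)
    linarith [h1, h2', hfin]
  · obtain ⟨φ, hφ⟩ : ∃ φ, φ = π/2 - θ := ⟨_, rfl⟩
    have hφ0 : (0:ℝ) ≤ φ := by rw [hφ]; linarith
    have hφ1 : φ ≤ 0.671 := by rw [hφ]; linarith
    have hθ : θ = π/2 - φ := by rw [hφ]; ring
    rw [hθ, Real.sin_pi_div_two_sub, Real.cos_pi_div_two_sub]
    have hcl := cos_lb φ hφ0
    have hsu := sin_ub φ hφ0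
    have h1 : (π-2)*(π/2-φ)*Real.sin φ ≤ (π-2)*(π/2-φ)*(φ - φ^3/6 + φ^5/120) :=
      mul_le_mul_of_nonneg_left hsu (mul_nonneg (by linarith) (by linarith))
    have h2' : π*(1 - φ^2/2 + φ^4/24 - φ^6/720) ≤ π*Real.cos φ :=
      mul_le_mul_of_nonneg_left hcl (by linarith)
    have hφ3 : φ^3 ≤ 0.671*φ^2 := by nlinarith [sq_nonneg φ]
    have hφ4 : φ^4 ≤ 0.450241*φ^2 := by nlinarith [sq_nonneg φ, sq_nonneg (φ^2)]
    have hφ5 : (0:ℝ) ≤ φ^5 := pow_nonneg hφ0 5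
    have hq : (0:ℝ) ≤ 0.2067 - 0.4293*φ + 0.2988*φ^2 - 0.0594*φ^3 - 0.01495*φ^4 := by
      linarith [sq_nonneg (φ - 0.851), hφ3, hφ4, hφ0, hφ1]
    have k0 : (0:ℝ) ≤ 2 - (π-2)*π/2 - 0.2067 := by linarith
    have k1 : (0:ℝ) ≤ (π/2 - 2 + 0.4293) * φ :=
      mul_nonneg (by linarith) hφ0
    have k2 : (0:ℝ) ≤ ((π-2)*π/12 - 0.2988) * φ^2 :=
      mul_nonneg (by linarith) (sq_nonneg φ)
    have k3 : (0:ℝ) ≤ (π/24 - (π-2)/6 + 0.0594) * φ^3 :=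
      mul_nonneg (by linarith) (pow_nonneg hφ0 3)
    have k4 : (0:ℝ) ≤ (0.01495 - (π-2)*π/240) * φ^4 :=
      mul_nonneg (by linarith) (pow_nonneg hφ0 4)
    have k5 : (0:ℝ) ≤ ((π-2)/120 - π/720) * φ^5 :=
      mul_nonneg (by linarith) hφ5
    have hH : (0:ℝ) ≤ (2 - (π-2)*π/2) + (π/2 - 2)*φ + ((π-2)*π/12)*φ^2
        + (π/24 - (π-2)/6)*φ^3 + (-(π-2)*π/240)*φ^4 + ((π-2)/120 - π/720)*φ^5 := by
      linarith [hq, k0, k1, k2, k3, k4, k5]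
    linarith [h1, h2', mul_nonneg hφ0 hH]
theorem stmt_4 : ∀ x ∈ Set.Icc (0:ℝ) 1,
    Real.arcsin x ≤
      (Real.pi / (Real.pi - 2)) * x /
        (2 / (Real.pi - 2) + Real.sqrt (1 - x ^ 2)) := by
  rintro x ⟨hx0, hx1⟩
  have hπ2 : (0:ℝ) < π - 2 := by linarith [Real.pi_gt_d6]
  have hs : (0:ℝ) ≤ Real.sqrt (1 - x ^ 2) := Real.sqrt_nonneg _
  have hD : (0:ℝ) < 2 / (π - 2) + Real.sqrt (1 - x ^ 2) := by positivity
  rw [le_div_iff₀ hD]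
  have hθ0 : 0 ≤ Real.arcsin x := Real.arcsin_nonneg.2 hx0
  have hθ2 : Real.arcsin x ≤ π/2 := Real.arcsin_le_pi_div_two x
  have hk := key (Real.arcsin x) hθ0 hθ2
  rw [Real.cos_arcsin, Real.sin_arcsin (by linarith) hx1] at hk
  rw [div_add' _ _ _ (ne_of_gt hπ2), ← mul_div_assoc, div_mul_eq_mul_div, div_le_div_iff₀ hπ2 hπ2]
  nlinarith [mul_le_mul_of_nonneg_right hk (le_of_lt hπ2)]
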